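/- Fix real p, q with 0 < q < 1 and p = 1-q, and let n ≥ 1 be an integer. Let X_1, …, X_n be independent random variables, each geometrically distributed on {1,2,3,…} with P(X = k) = p·q^{k-1}. Then the expected value of max(X_1, …, X_n) equals Σ_{k=1}^{n} C(n,k)·(-1)^{k-1}/(1 - q^k). -/

import Mathlib

open MeasureTheory ProbabilityTheory
open scoped ENNReal


lemma nat_cast_eq_tsum (N : ℕ) : (N : ℝ≥0∞) = ∑' m : ℕ, Set.indicator {m' : ℕ | m' < N} 1 m := by
  rw [tsum_eq_sum (s := Finset.range N) (by intro b hb; simp [Set.indicator_apply, Finset.mem_range] at hb ⊢; omega)]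
  simp only [Set.indicator_apply, Set.mem_setOf_eq]
  rw [Finset.sum_congr rfl (fun b hb => if_pos (Finset.mem_range.mp hb))]
  simp

lemma lintegral_nat' {Ω : Type*} [MeasurableSpace Ω] (μ : Measure Ω) (M : Ω → ℕ) (hM : Measurable M) :
    ∫⁻ ω, (M ω : ℝ≥0∞) ∂μ = ∑' m : ℕ, μ {ω | m < M ω} := by
  have key : ∀ ω, (M ω : ℝ≥0∞) = ∑' m : ℕ, Set.indicator {ω' : Ω | m < M ω'} (fun _ => 1) ω := by
    intro ω
    rw [nat_cast_eq_tsum]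
    simp [Set.indicator_apply]
  simp_rw [key]
  rw [lintegral_tsum (fun m => (Measurable.indicator measurable_const
    ((measurableSet_lt measurable_const hM))).aemeasurable)]
  congr 1; funext m
  rw [lintegral_indicator (measurableSet_lt measurable_const hM)]
  simp

lemma geom_cdf (q : ℝ) (hq0 : 0 < q) (hq1 : q < 1) (p : ℝ) (hp : p = 1 - q)
    {Ω : Type*} [MeasurableSpace Ω] (μ : Measure Ω) [IsProbabilityMeasure μ]
    (Y : Ω → ℕ) (hm : Measurable Y)
    (hd : ∀ k : ℕ, 1 ≤ k → μ {ω | Y ω = k} = ENNReal.ofReal (p * q ^ (k - 1))) (m : ℕ) :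
    μ {ω | Y ω ≤ m} = ENNReal.ofReal (1 - q ^ m) := by
  have hp0 : 0 ≤ p := by rw [hp]; linarith
  have hsum0 : ∑' j : ℕ, ENNReal.ofReal (p * q ^ j) = 1 := by
    have hsumm : Summable (fun j : ℕ => p * q ^ j) :=
      (summable_geometric_of_lt_one hq0.le hq1).mul_left p
    rw [← ENNReal.ofReal_tsum_of_nonneg (fun j => mul_nonneg hp0 (by positivity)) hsumm]
    rw [tsum_mul_left, tsum_geometric_of_lt_one hq0.le hq1, hp,
      mul_inv_cancel₀ (by linarith)]
    simp
  have hdisj : Pairwise (Function.onFun Disjoint fun k : ℕ => {ω : Ω | Y ω = k}) := by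
    intro a b hab
    simp only [Function.onFun, Set.disjoint_left]
    rintro ω rfl h2; exact hab h2
  have hzero : μ {ω | Y ω = 0} = 0 := by
    have hU : (Set.univ : Set Ω) = ⋃ k : ℕ, {ω | Y ω = k} := by ext ω; simp
    have h1 : (1 : ℝ≥0∞) = ∑' k : ℕ, μ {ω | Y ω = k} := by
      rw [← measure_univ (μ := μ), hU,
        measure_iUnion hdisj (fun k => hm (measurableSet_singleton k))]
    have h3 : ∑' k : ℕ, μ {ω | Y ω = k}
        = μ {ω | Y ω = 0} + ∑' j : ℕ, μ {ω | Y ω = j + 1} :=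
      tsum_eq_zero_add' ENNReal.summable
    have h2 : ∑' j : ℕ, μ {ω | Y ω = j + 1} = 1 := by
      rw [show (fun j : ℕ => μ {ω | Y ω = j + 1}) = fun j => ENNReal.ofReal (p * q ^ j) from
        funext fun j => by rw [hd (j+1) (by omega)]; simp, hsum0]
    rw [h3, h2] at h1
    have h4 : μ {ω | Y ω = 0} + 1 = 0 + 1 := by rw [← h1, zero_add]
    exact (ENNReal.add_left_inj (by simp)).mp h4
  -- now the cdf
  have hsplit : {ω : Ω | Y ω ≤ m} = ⋃ k ∈ Finset.range (m+1), {ω | Y ω = k} := by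
    ext ω; simp [Nat.lt_succ_iff]
  rw [hsplit, measure_biUnion_finset
    (fun a _ b _ hab => hdisj hab) (fun k _ => hm (measurableSet_singleton k))]
  rw [Finset.sum_range_succ']
  simp only [hzero, add_zero]
  have : ∀ j ∈ Finset.range m, μ {ω | Y ω = j + 1} = ENNReal.ofReal (p * q ^ j) := by
    intro j _; rw [hd (j+1) (by omega)]; simp
  rw [Finset.sum_congr rfl this,
    ← ENNReal.ofReal_sum_of_nonneg (fun j _ => mul_nonneg hp0 (by positivity))]
  congr 1
  rw [← Finset.mul_sum, geom_sum_eq (by linarith : q ≠ 1), hp]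
  have hq1' : q - 1 ≠ 0 := by linarith
  field_simp
  ring

lemma expand_pow (q : ℝ) (n : ℕ) (hn : 1 ≤ n) (m : ℕ) :
    1 - (1 - q ^ m) ^ n
      = ∑ k ∈ Finset.Icc 1 n, ((n.choose k : ℝ) * (-1) ^ (k - 1)) * (q ^ k) ^ m := by
  have h := add_pow (-(q ^ m)) 1 n
  have hIcc : Finset.Icc 1 n = Finset.Ioc 0 n := rfl
  have hrange : Finset.range (n + 1) = Finset.Icc 0 n := by
    rw [Finset.range_eq_Ico]; rfl
  have hsplit : (1 - q ^ m) ^ n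
      = 1 + ∑ k ∈ Finset.Icc 1 n, (-(q ^ m)) ^ k * (n.choose k : ℝ) := by
    have : (1 : ℝ) - q ^ m = -(q ^ m) + 1 := by ring
    rw [this, h, hrange]
    rw [← Finset.sum_Ioc_add_eq_sum_Icc (by omega : (0:ℕ) ≤ n)]
    simp [add_comm, hIcc]
  rw [hsplit]
  rw [show ∀ a : ℝ, 1 - (1 + a) = -a from fun a => by ring, ← Finset.sum_neg_distrib]
  apply Finset.sum_congr rfl
  intro k hk
  simp only [Finset.mem_Icc] at hk
  have hk1 : k - 1 + 1 = k := by omega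
  rw [neg_pow, neg_pow, ← hk1]
  ring_nf
  rw [Nat.add_sub_cancel_left]

lemma geom_summable_k (q : ℝ) (hq0 : 0 < q) (hq1 : q < 1) (k : ℕ) (hk : 1 ≤ k) (c : ℝ) :
    Summable (fun m : ℕ => c * (q ^ k) ^ m) := by
  apply Summable.mul_left
  exact summable_geometric_of_lt_one (by positivity)
    (pow_lt_one₀ hq0.le hq1 (by omega))

lemma tail_summable (q : ℝ) (hq0 : 0 < q) (hq1 : q < 1) (n : ℕ) (hn : 1 ≤ n) :
    Summable (fun m : ℕ => 1 - (1 - q ^ m) ^ n) := by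
  have := fun m => expand_pow q n hn m
  rw [show (fun m : ℕ => 1 - (1 - q ^ m) ^ n)
    = fun m => ∑ k ∈ Finset.Icc 1 n, ((n.choose k : ℝ) * (-1) ^ (k - 1)) * (q ^ k) ^ m
    from funext this]
  exact summable_sum (fun k hk =>
    geom_summable_k q hq0 hq1 k (Finset.mem_Icc.mp hk).1 _)

lemma tail_sum (q : ℝ) (hq0 : 0 < q) (hq1 : q < 1) (n : ℕ) (hn : 1 ≤ n) :
    ∑' m : ℕ, (1 - (1 - q ^ m) ^ n)
      = ∑ k ∈ Finset.Icc 1 n, (n.choose k : ℝ) * (-1) ^ (k - 1) / (1 - q ^ k) := by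
  simp_rw [expand_pow q n hn]
  rw [Summable.tsum_finsetSum (fun k hk => geom_summable_k q hq0 hq1 k (Finset.mem_Icc.mp hk).1 _)]
  apply Finset.sum_congr rfl
  intro k hk
  rw [tsum_mul_left, tsum_geometric_of_lt_one (by positivity)
    (pow_lt_one₀ hq0.le hq1 (by have := (Finset.mem_Icc.mp hk).1; omega))]
  rw [div_eq_mul_inv]

/-- The expected maximum of `n` i.i.d. geometric random variables with
`P(X = k) = p·q^{k-1}` on `{1,2,…}` equals `Σ_{k=1}^n C(n,k)·(-1)^{k-1}/(1-q^k)`. -/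
theorem expected_max_geometric (q : ℝ) (hq0 : 0 < q) (hq1 : q < 1)
    (p : ℝ) (hp : p = 1 - q) (n : ℕ) (hn : 1 ≤ n)
    {Ω : Type*} [MeasurableSpace Ω] (μ : Measure Ω) [IsProbabilityMeasure μ]
    (X : Fin n → Ω → ℕ) (hmeas : ∀ i, Measurable (X i))
    (hindep : iIndepFun X μ)
    (hdist : ∀ i, ∀ k : ℕ, 1 ≤ k → μ {ω | X i ω = k} = ENNReal.ofReal (p * q ^ (k - 1))) :
    ∫ ω, ((Finset.univ.sup fun i => X i ω : ℕ) : ℝ) ∂μ =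
      ∑ k ∈ Finset.Icc 1 n, (n.choose k : ℝ) * (-1) ^ (k - 1) / (1 - q ^ k) := by
  set M : Ω → ℕ := fun ω => Finset.univ.sup (fun i => X i ω) with hMdef
  have hne : (Finset.univ : Finset (Fin n)).Nonempty := ⟨⟨0, hn⟩, Finset.mem_univ _⟩
  have hMmeas : Measurable M := by
    have h := Finset.measurable_sup' hne (fun i _ => hmeas i)
    have heq : M = Finset.univ.sup' hne X := by
      funext ω
      rw [Finset.sup'_apply, Finset.sup'_eq_sup]
    rw [heq]
    exact h
  have hqm : ∀ m : ℕ, q ^ m ≤ 1 := fun m => pow_le_one₀ hq0.le hq1.le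
  have hf0 : ∀ m : ℕ, 0 ≤ 1 - (1 - q ^ m) ^ n := by
    intro m
    have h1 : (1 - q ^ m) ^ n ≤ 1 := pow_le_one₀ (by linarith [hqm m]) (by
      have := pow_pos hq0 m; linarith)
    linarith
  have hcdf : ∀ m : ℕ, μ {ω | M ω ≤ m} = ENNReal.ofReal ((1 - q ^ m) ^ n) := by
    intro m
    have hset : {ω | M ω ≤ m} = ⋂ i, X i ⁻¹' Set.Iic m := by
      ext ω
      simp [hMdef, Finset.sup_le_iff, Set.mem_iInter, Set.mem_preimage, Set.mem_Iic]
    rw [hset, hindep.meas_iInter (fun i => ⟨Set.Iic m, measurableSet_Iic, rfl⟩)]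
    have heach : ∀ i : Fin n, μ (X i ⁻¹' Set.Iic m) = ENNReal.ofReal (1 - q ^ m) := by
      intro i
      have : X i ⁻¹' Set.Iic m = {ω | X i ω ≤ m} := rfl
      rw [this]
      exact geom_cdf q hq0 hq1 p hp μ (X i) (hmeas i) (hdist i) m
    rw [Finset.prod_congr rfl (fun i _ => heach i), Finset.prod_const, Finset.card_univ,
      Fintype.card_fin, ← ENNReal.ofReal_pow (by linarith [hqm m])]
  have htail : ∀ m : ℕ, μ {ω | m < M ω} = ENNReal.ofReal (1 - (1 - q ^ m) ^ n) := by
    intro m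
    have hc : {ω | m < M ω} = {ω | M ω ≤ m}ᶜ := by
      ext ω; simp
    rw [hc, measure_compl (measurableSet_le hMmeas measurable_const) (measure_ne_top μ _), hcdf m,
      measure_univ, ← ENNReal.ofReal_one,
      ← ENNReal.ofReal_sub _ (pow_nonneg (by linarith [hqm m]) n)]
  have hL : ∫⁻ ω, ((M ω : ℕ) : ℝ≥0∞) ∂μ
      = ENNReal.ofReal (∑' m : ℕ, (1 - (1 - q ^ m) ^ n)) := by
    rw [lintegral_nat' μ M hMmeas]
    simp_rw [htail]
    rw [← ENNReal.ofReal_tsum_of_nonneg hf0 (tail_summable q hq0 hq1 n hn)]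
  rw [integral_eq_lintegral_of_nonneg_ae
    (Filter.Eventually.of_forall fun ω => Nat.cast_nonneg _)
    ((measurable_from_top.comp hMmeas).aestronglyMeasurable)]
  simp_rw [ENNReal.ofReal_natCast]
  rw [hL, ENNReal.toReal_ofReal (tsum_nonneg hf0), tail_sum q hq0 hq1 n hn]
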